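/- (Semiclassicalisation theorem) Let A be an abstract Swiss cheese with δ_1(A) > 0. Then there exists a semiclassical abstract Swiss cheese B such that X_B ⊆ X_A and δ_1(B) ≥ δ_1(A). -/

import Mathlib

open Metric Set

/-- An abstract Swiss cheese: a sequence `((a_n, r_n))_{n ≥ 0}` of centres `a n ∈ ℂ` and
non-negative radii `r n ∈ [0, ∞)`. -/
structure SwissCheese where
  a : ℕ → ℂ
  r : ℕ → ℝ
  r_nonneg : ∀ n, 0 ≤ r n

namespace SwissCheese

/-- The associated Swiss cheese set `X_A = closedBall(a₀, r₀) ∖ ⋃_{n ≥ 1} ball(a_n, r_n)`. -/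
def cheeseSet (A : SwissCheese) : Set ℂ :=
  closedBall (A.a 0) (A.r 0) \ ⋃ n ∈ Set.Ici 1, ball (A.a n) (A.r n)

/-- The significant index set `S_A = {n ≥ 1 : r_n > 0}`. -/
def sig (A : SwissCheese) : Set ℕ := {n | 1 ≤ n ∧ 0 < A.r n}

/-- The radius sum `ρ(A) = ∑_{n ≥ 1} r_n` is finite. -/
def RadSummable (A : SwissCheese) : Prop := Summable fun n => A.r (n + 1)

/-- The radius sum `ρ(A) = ∑_{n ≥ 1} r_n`. -/
noncomputable def radSum (A : SwissCheese) : ℝ := ∑' n, A.r (n + 1)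

/-- The discrepancy `δ₁(A) = r₀ − ∑_{n ≥ 1} r_n`. -/
noncomputable def disc (A : SwissCheese) : ℝ := A.r 0 - A.radSum

/-- `A` is classical: `ρ(A) < ∞`, `r₀ > 0`, each significant closed disk is contained in
`ball(a₀, r₀)`, and distinct significant closed disks are disjoint. -/
def IsClassical (A : SwissCheese) : Prop :=
  A.RadSummable ∧ 0 < A.r 0 ∧ ∀ k ∈ A.sig,
    closedBall (A.a k) (A.r k) ⊆ ball (A.a 0) (A.r 0) ∧
    ∀ l ∈ A.sig, l ≠ k → closedBall (A.a k) (A.r k) ∩ closedBall (A.a l) (A.r l) = ∅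

/-- `A` is semiclassical: `ρ(A) < ∞`, `r₀ > 0`, each significant open disk is contained in
`ball(a₀, r₀)`, and distinct significant open disks are disjoint. -/
def IsSemiclassical (A : SwissCheese) : Prop :=
  A.RadSummable ∧ 0 < A.r 0 ∧ ∀ k ∈ A.sig,
    ball (A.a k) (A.r k) ⊆ ball (A.a 0) (A.r 0) ∧
    ∀ l ∈ A.sig, l ≠ k → ball (A.a k) (A.r k) ∩ ball (A.a l) (A.r l) = ∅

/-- `A` is annular: `a₀ = a₁` and `r₀ > r₁ > 0`. -/
def IsAnnular (A : SwissCheese) : Prop := A.a 0 = A.a 1 ∧ A.r 1 < A.r 0 ∧ 0 < A.r 1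

/-- The annular radius sum `ρ_ann(A) = ∑_{n ≥ 2} r_n`. -/
noncomputable def annRadSum (A : SwissCheese) : ℝ := ∑' n, A.r (n + 2)

/-- The annular discrepancy `δ_ann(A) = r₀ − r₁ − 2 ∑_{n ≥ 2} r_n`. -/
noncomputable def annDisc (A : SwissCheese) : ℝ := A.r 0 - A.r 1 - 2 * A.annRadSum

/-- `A` is redundancy-free: every significant open disk meets `closedBall(a₀, r₀)`, and no
significant open disk is contained in another one. -/
def IsRedundancyFree (A : SwissCheese) : Prop :=
  ∀ k ∈ A.sig, (ball (A.a k) (A.r k) ∩ closedBall (A.a 0) (A.r 0)).Nonempty ∧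
    ∀ l ∈ A.sig, l ≠ k → ¬ ball (A.a k) (A.r k) ⊆ ball (A.a l) (A.r l)

/-- `H_A(U)`: the set of significant indices whose closed disk meets `U`. -/
def HSet (A : SwissCheese) (U : Set ℂ) : Set ℕ :=
  {n | n ∈ A.sig ∧ (closedBall (A.a n) (A.r n) ∩ U).Nonempty}

/-- `ρ_U(A) = ∑_{n ∈ H_A(U)} r_n`. -/
noncomputable def rhoU (A : SwissCheese) (U : Set ℂ) : ℝ := ∑' n : A.HSet U, A.r n

/-- The error set `E(A)`. -/
def errorSet (A : SwissCheese) : Set ℂ :=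
  (⋃ m ∈ A.sig, ⋃ n ∈ A.sig, ⋃ _ : m ≠ n,
      closedBall (A.a m) (A.r m) ∩ closedBall (A.a n) (A.r n)) ∪
    ⋃ n ∈ A.sig, (ball (A.a 0) (A.r 0))ᶜ ∩ closedBall (A.a n) (A.r n)

/-- A Swiss cheese set is compact. -/
instance (A : SwissCheese) : CompactSpace A.cheeseSet :=
  isCompact_iff_compactSpace.mp
    ((isCompact_closedBall _ _).diff (isOpen_biUnion fun _ _ => isOpen_ball))

end SwissCheese

namespace SC15

noncomputable def ff (A : SwissCheese) : ℕ → ℝ := A.sig.indicator A.r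

lemma ff_nonneg (A : SwissCheese) (n : ℕ) : 0 ≤ ff A n :=
  Set.indicator_apply_nonneg (fun _ => A.r_nonneg n)

noncomputable def sg (A : SwissCheese) (C : Set ℕ) : ℝ := ∑' n, C.indicator (ff A) n

lemma summable_ff {A : SwissCheese} (hsum : A.RadSummable) : Summable (ff A) :=
  ((summable_nat_add_iff 1).mp hsum).indicator _

lemma sg_nonneg (A : SwissCheese) (C : Set ℕ) : 0 ≤ sg A C :=
  tsum_nonneg fun n => Set.indicator_apply_nonneg fun _ => ff_nonneg A n

lemma sg_mono {A : SwissCheese} (hs : Summable (ff A)) {C D : Set ℕ} (h : C ⊆ D) :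
    sg A C ≤ sg A D :=
  Summable.tsum_le_tsum
    (fun n => Set.indicator_le_indicator_of_subset h (fun m => ff_nonneg A m) n)
    (hs.indicator _) (hs.indicator _)

lemma sg_union {A : SwissCheese} (hs : Summable (ff A)) {C D : Set ℕ}
    (hdisj : Disjoint C D) : sg A (C ∪ D) = sg A C + sg A D := by
  unfold sg
  rw [Set.indicator_union_of_disjoint hdisj]
  exact Summable.tsum_add (hs.indicator _) (hs.indicator _)

lemma sg_empty (A : SwissCheese) : sg A ∅ = 0 := by
  unfold sg; simp

lemma le_sg {A : SwissCheese} (hs : Summable (ff A)) {C : Set ℕ} {k : ℕ} (hk : k ∈ C) :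
    ff A k ≤ sg A C := by
  have := Summable.le_tsum (hs.indicator C) k
    (fun b _ => Set.indicator_apply_nonneg fun _ => ff_nonneg A b)
  rwa [Set.indicator_of_mem hk] at this

lemma ff_eq_of_sig {A : SwissCheese} {n : ℕ} (hn : n ∈ A.sig) : ff A n = A.r n :=
  Set.indicator_of_mem hn _

lemma sg_univ_le {A : SwissCheese} (hsum : A.RadSummable) :
    sg A Set.univ ≤ A.radSum := by
  have hs := summable_ff hsum
  have h0 : ff A 0 = 0 := by
    apply Set.indicator_of_notMem
    simp [SwissCheese.sig]
  unfold sg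
  rw [Set.indicator_univ, Summable.tsum_eq_zero_add hs, h0, zero_add]
  exact Summable.tsum_le_tsum
    (fun n => Set.indicator_le_self' (fun m _ => A.r_nonneg m) (n + 1))
    ((summable_nat_add_iff 1).mpr hs) hsum

def cls (E : Set (ℕ × ℕ)) (n : ℕ) : Set ℕ := {m | (n, m) ∈ E}

def ZW (A : SwissCheese) (C : Set ℕ) : Prop :=
  ∃ c : ℂ, ∃ s : ℝ, 0 ≤ s ∧ dist c (A.a 0) + s ≤ A.r 0 ∧ A.r 0 - sg A C ≤ s ∧
    ∀ n ∈ C, n ∈ A.sig → s + A.r n ≤ dist c (A.a n)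

def HW (A : SwissCheese) (C : Set ℕ) : Prop :=
  ∃ c : ℂ, ∀ n ∈ C, n ∈ A.sig → dist c (A.a n) + A.r n ≤ sg A C

structure Good (A : SwissCheese) (E : Set (ℕ × ℕ)) : Prop where
  refl : ∀ n, (n, n) ∈ E
  symm : ∀ {m n}, (m, n) ∈ E → (n, m) ∈ E
  trans : ∀ {x y z}, (x, y) ∈ E → (y, z) ∈ E → (x, z) ∈ E
  supp : ∀ {m n}, (m, n) ∈ E → m ≠ n → (m = 0 ∨ m ∈ A.sig) ∧ (n = 0 ∨ n ∈ A.sig)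
  zw : ZW A (cls E 0)
  hw : ∀ n, n ∈ A.sig → (n, 0) ∉ E → HW A (cls E n)

lemma mem_cls_self {A : SwissCheese} {E : Set (ℕ × ℕ)} (hg : Good A E) (n : ℕ) :
    n ∈ cls E n := hg.refl n

lemma cls_eq {A : SwissCheese} {E : Set (ℕ × ℕ)} (hg : Good A E) {m n : ℕ}
    (h : (m, n) ∈ E) : cls E m = cls E n :=
  Set.ext fun x => ⟨fun hx => hg.trans (hg.symm h) hx, fun hx => hg.trans h hx⟩

lemma cls_subset_sig {A : SwissCheese} {E : Set (ℕ × ℕ)} (hg : Good A E) {n : ℕ}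
    (hn : n ∈ A.sig) (h0 : (n, 0) ∉ E) : cls E n ⊆ A.sig := by
  intro m hm
  by_cases hmn : n = m
  · exact hmn ▸ hn
  · rcases (hg.supp hm hmn).2 with h | h
    · exact absurd (h ▸ hm) h0
    · exact h

lemma cls_disjoint {A : SwissCheese} {E : Set (ℕ × ℕ)} (hg : Good A E) {i j : ℕ}
    (hij : (i, j) ∉ E) : Disjoint (cls E i) (cls E j) := by
  rw [Set.disjoint_left]
  intro x hxi hxj
  exact hij (hg.trans hxi (hg.symm hxj))


lemma dist_seg (c c' : ℂ) {t d : ℝ} (hd : d = dist c c') (ht0 : 0 ≤ t) (htd : t ≤ d) :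
    dist (c + (t / d) • (c' - c)) c = t ∧ dist (c + (t / d) • (c' - c)) c' = d - t := by
  rcases eq_or_lt_of_le (dist_nonneg.trans_eq hd.symm) with h0 | h0
  · have hd0' : d = 0 := h0.symm
    have hcc : c = c' := by rw [← dist_eq_zero, ← hd, hd0']
    have ht : t = 0 := le_antisymm (htd.trans hd0'.le) ht0
    subst hcc
    simp [ht, hd0']
  · have hdne : d ≠ 0 := ne_of_gt h0
    constructor
    · rw [dist_eq_norm]
      have : c + (t / d) • (c' - c) - c = (t / d) • (c' - c) := by ring_nf
      rw [this, norm_smul, Real.norm_eq_abs, abs_of_nonneg (div_nonneg ht0 h0.le)]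
      rw [show ‖c' - c‖ = dist c' c from (dist_eq_norm c' c).symm, ← dist_comm c c', ← hd]
      field_simp
    · rw [dist_eq_norm]
      have : c + (t / d) • (c' - c) - c' = (t / d - 1) • (c' - c) := by
        have : (t / d - 1) • (c' - c) = (t/d) • (c' - c) - (c' - c) := by
          rw [sub_smul, one_smul]
        rw [this]; ring_nf
      rw [this, norm_smul, Real.norm_eq_abs]
      have htd1 : t / d ≤ 1 := (div_le_one h0).2 htd
      rw [abs_of_nonpos (by linarith), show ‖c' - c‖ = dist c' c from (dist_eq_norm c' c).symm,
        ← dist_comm c c', ← hd]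
      field_simp
      ring

lemma merge_point {c c' : ℂ} {p q : ℝ} (hp : 0 ≤ p) (hq : 0 ≤ q)
    (hd : dist c c' ≤ p + q) : ∃ z : ℂ, dist z c ≤ q ∧ dist z c' ≤ p := by
  set d := dist c c' with hdd
  have hd0 : 0 ≤ d := dist_nonneg
  set t : ℝ := min (max ((d + q - p) / 2) 0) d with htdef
  have ht0 : 0 ≤ t := le_min (le_max_right _ _) hd0
  have htd : t ≤ d := min_le_right _ _
  obtain ⟨h1, h2⟩ := dist_seg c c' hdd ht0 htd
  refine ⟨c + (t / d) • (c' - c), ?_, ?_⟩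
  · rw [h1]
    exact (min_le_left _ _).trans (max_le (by linarith) hq)
  · rw [h2]
    have : min ((d + q - p) / 2) d ≤ t := min_le_min (le_max_left _ _) le_rfl
    rcases min_le_iff.1 (le_refl (min ((d + q - p) / 2) d)) with h | h
    · -- not useful; do direct case analysis
      rcases le_total ((d + q - p) / 2) d with hc | hc
      · have : (d + q - p) / 2 ≤ t := by
          rw [min_eq_left hc] at this; exact this
        linarith
      · have : d ≤ t := by
          rw [min_eq_right hc] at this; exact this
        linarith
    · rcases le_total ((d + q - p) / 2) d with hc | hc
      · have : (d + q - p) / 2 ≤ t := by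
          rw [min_eq_left hc] at this; exact this
        linarith
      · have : d ≤ t := by
          rw [min_eq_right hc] at this; exact this
        linarith

lemma escape_point {c₀ cc : ℂ} {s₀ ρ : ℝ} (hρ : 0 ≤ ρ)
    (h : s₀ - ρ < dist c₀ cc) (hd0 : 0 < dist c₀ cc) :
    ∃ z : ℂ, dist z c₀ ≤ ρ ∧ s₀ ≤ dist z cc := by
  set d := dist c₀ cc with hdd
  set t : ℝ := max (s₀ - d) 0 with htdef
  have ht0 : 0 ≤ t := le_max_right _ _
  have htp : t ≤ ρ := max_le (by linarith) hρ
  set z : ℂ := c₀ + (t / d) • (c₀ - cc) with hzdef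
  have h1 : dist z c₀ = t := by
    rw [dist_eq_norm]
    have : z - c₀ = (t / d) • (c₀ - cc) := by rw [hzdef]; ring_nf
    rw [this, norm_smul, Real.norm_eq_abs, abs_of_nonneg (div_nonneg ht0 hd0.le),
      show ‖c₀ - cc‖ = dist c₀ cc from (dist_eq_norm c₀ cc).symm, ← hdd]
    field_simp
  have h2 : dist z cc = d + t := by
    rw [dist_eq_norm]
    have : z - cc = (1 + t / d) • (c₀ - cc) := by
      rw [hzdef, add_smul, one_smul]; ring_nf
    rw [this, norm_smul, Real.norm_eq_abs,
      abs_of_nonneg (by positivity : (0:ℝ) ≤ 1 + t / d),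
      show ‖c₀ - cc‖ = dist c₀ cc from (dist_eq_norm c₀ cc).symm, ← hdd]
    field_simp
  refine ⟨z, by rw [h1]; exact htp, ?_⟩
  rw [h2]
  have : s₀ - d ≤ t := le_max_left _ _
  linarith


lemma good_merge {A : SwissCheese} {E : Set (ℕ × ℕ)} (hg : Good A E) {i j : ℕ}
    (hi : i = 0 ∨ i ∈ A.sig) (hj : j = 0 ∨ j ∈ A.sig)
    (hzw : 0 ∈ cls E i ∪ cls E j → ZW A (cls E i ∪ cls E j))
    (hhw : 0 ∉ cls E i ∪ cls E j → HW A (cls E i ∪ cls E j)) :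
    Good A (E ∪ (cls E i ∪ cls E j) ×ˢ (cls E i ∪ cls E j)) := by
  set D := cls E i ∪ cls E j with hD
  have hsat : ∀ x ∈ D, ∀ {y : ℕ}, (x, y) ∈ E → y ∈ D := by
    rintro x (hx | hx) y hxy
    · exact Or.inl (hg.trans hx hxy)
    · exact Or.inr (hg.trans hx hxy)
  have hmemD : ∀ m ∈ D, m = 0 ∨ m ∈ A.sig := by
    rintro m (hm | hm)
    · by_cases hmi : i = m
      · exact hmi ▸ hi
      · exact (hg.supp hm hmi).2
    · by_cases hmj : j = m
      · exact hmj ▸ hj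
      · exact (hg.supp hm hmj).2
  have hclsD : ∀ x ∈ D, cls (E ∪ D ×ˢ D) x = D := by
    intro x hx
    ext m
    constructor
    · rintro (h | h)
      · exact hsat x hx h
      · exact h.2
    · intro hm
      exact Or.inr ⟨hx, hm⟩
  have hclsN : ∀ x, x ∉ D → cls (E ∪ D ×ˢ D) x = cls E x := by
    intro x hx
    ext m
    constructor
    · rintro (h | h)
      · exact h
      · exact absurd h.1 hx
    · exact fun hm => Or.inl hm
  refine ⟨?_, ?_, ?_, ?_, ?_, ?_⟩
  · exact fun n => Or.inl (hg.refl n)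
  · rintro m n (h | h)
    · exact Or.inl (hg.symm h)
    · exact Or.inr ⟨h.2, h.1⟩
  · rintro x y z (h1 | h1) (h2 | h2)
    · exact Or.inl (hg.trans h1 h2)
    · exact Or.inr ⟨hsat y h2.1 (hg.symm h1), h2.2⟩
    · exact Or.inr ⟨h1.1, hsat y h1.2 h2⟩
    · exact Or.inr ⟨h1.1, h2.2⟩
  · rintro m n (h | h) hmn
    · exact hg.supp h hmn
    · exact ⟨hmemD m h.1, hmemD n h.2⟩
  · by_cases h0 : 0 ∈ D
    · rw [hclsD 0 h0]; exact hzw h0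
    · rw [hclsN 0 h0]; exact hg.zw
  · intro n hn hn0
    by_cases hnD : n ∈ D
    · have h0D : 0 ∉ D := fun h0 => hn0 (Or.inr ⟨hnD, h0⟩)
      rw [hclsD n hnD]; exact hhw h0D
    · rw [hclsN n hnD]
      exact hg.hw n hn fun h => hn0 (Or.inl h)

lemma chain_seq {c : Set (Set (ℕ × ℕ))} (hc : IsChain (· ⊆ ·) c)
    {E : ℕ → Set (ℕ × ℕ)} (hE : ∀ i, E i ∈ c) :
    ∃ G : ℕ → Set (ℕ × ℕ), (∀ k, G k ∈ c) ∧ Monotone G ∧ ∀ i k, i ≤ k → E i ⊆ G k := by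
  classical
  let G : ℕ → Set (ℕ × ℕ) :=
    fun k => Nat.rec (E 0) (fun k Gk => if E (k + 1) ⊆ Gk then Gk else E (k + 1)) k
  have hGc : ∀ k, G k ∈ c := by
    intro k
    induction k with
    | zero => exact hE 0
    | succ k ih =>
      dsimp only [G]
      split_ifs
      · exact ih
      · exact hE (k + 1)
  have hmono1 : ∀ k, G k ⊆ G (k + 1) := by
    intro k
    dsimp only [G]
    split_ifs with h
    · exact subset_rfl
    · rcases hc.total (hGc k) (hE (k + 1)) with h' | h'
      · exact h'
      · exact absurd h' h
  have hmono : Monotone G := monotone_nat_of_le_succ hmono1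
  have hEG : ∀ i, E i ⊆ G i := by
    intro i
    cases i with
    | zero => exact subset_rfl
    | succ i =>
      dsimp only [G]
      split_ifs with h
      · exact h
      · exact subset_rfl
  exact ⟨G, hGc, hmono, fun i k hik => (hEG i).trans (hmono hik)⟩

lemma HW_of_seq {A : SwissCheese} (hs : Summable (ff A)) {C : Set ℕ} {D : ℕ → Set ℕ}
    (hD : ∀ k, D k ⊆ C) (hcov : ∀ m ∈ C, ∃ i, ∀ k, i ≤ k → m ∈ D k)
    (x : ℕ) (hx : x ∈ A.sig) (hxD : ∀ k, x ∈ D k)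
    (hw : ∀ k, HW A (D k)) : HW A C := by
  choose cc hcc using hw
  have hbd : ∀ k, cc k ∈ closedBall (A.a x) (sg A C) := by
    intro k
    have h1 := hcc k x (hxD k) hx
    have h2 : sg A (D k) ≤ sg A C := sg_mono hs (hD k)
    have h3 := A.r_nonneg x
    rw [mem_closedBall]
    linarith
  obtain ⟨z, -, φ, hφ, hz⟩ := tendsto_subseq_of_bounded isBounded_closedBall hbd
  refine ⟨z, fun m hm hmsig => ?_⟩
  obtain ⟨i, hi⟩ := hcov m hm
  have hlim : Filter.Tendsto (fun k => dist (cc (φ k)) (A.a m) + A.r m)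
      Filter.atTop (nhds (dist z (A.a m) + A.r m)) :=
    (hz.dist tendsto_const_nhds).add tendsto_const_nhds
  refine le_of_tendsto hlim (Filter.eventually_atTop.2 ⟨i, fun k hk => ?_⟩)
  have hik : i ≤ φ k := hk.trans hφ.le_apply
  have h1 := hcc (φ k) m (hi (φ k) hik) hmsig
  exact h1.trans (sg_mono hs (hD (φ k)))

lemma ZW_of_seq {A : SwissCheese} (hs : Summable (ff A)) {C : Set ℕ} {D : ℕ → Set ℕ}
    (hD : ∀ k, D k ⊆ C) (hcov : ∀ m ∈ C, ∃ i, ∀ k, i ≤ k → m ∈ D k)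
    (hzw : ∀ k, ZW A (D k)) : ZW A C := by
  choose cc ss h0 hball hlow havoid using hzw
  have hr0 : 0 ≤ A.r 0 := A.r_nonneg 0
  have hccbd : ∀ k, cc k ∈ closedBall (A.a 0) (A.r 0) := by
    intro k
    have := hball k
    have := h0 k
    rw [mem_closedBall]
    linarith
  obtain ⟨z, -, φ, hφ, hz⟩ := tendsto_subseq_of_bounded isBounded_closedBall hccbd
  have hssbd : ∀ k, ss (φ k) ∈ Icc (0 : ℝ) (A.r 0) := by
    intro k
    have h1 := hball (φ k)
    have h2 := dist_nonneg (x := cc (φ k)) (y := A.a 0)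
    exact ⟨h0 (φ k), by linarith⟩
  obtain ⟨s, hsIcc, ψ, hψ, hsT⟩ := tendsto_subseq_of_bounded (isBounded_Icc (0:ℝ) (A.r 0)) hssbd
  rw [isClosed_Icc.closure_eq] at hsIcc
  have hzT : Filter.Tendsto (fun k => cc (φ (ψ k))) Filter.atTop (nhds z) :=
    hz.comp hψ.tendsto_atTop
  refine ⟨z, s, hsIcc.1, ?_, ?_, ?_⟩
  · refine le_of_tendsto ((hzT.dist tendsto_const_nhds).add hsT) (Filter.Eventually.of_forall ?_)
    exact fun k => hball (φ (ψ k))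
  · refine ge_of_tendsto hsT (Filter.Eventually.of_forall ?_)
    intro k
    have := hlow (φ (ψ k))
    have h2 : sg A (D (φ (ψ k))) ≤ sg A C := sg_mono hs (hD _)
    simp only [Function.comp_apply]
    linarith
  · intro n hn hnsig
    obtain ⟨i, hi⟩ := hcov n hn
    have hlim1 : Filter.Tendsto (fun k => ss (φ (ψ k)) + A.r n) Filter.atTop
        (nhds (s + A.r n)) := hsT.add tendsto_const_nhds
    have hlim2 : Filter.Tendsto (fun k => dist (cc (φ (ψ k))) (A.a n)) Filter.atTop
        (nhds (dist z (A.a n))) := hzT.dist tendsto_const_nhds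
    refine le_of_tendsto_of_tendsto hlim1 hlim2 (Filter.eventually_atTop.2 ⟨i, fun k hk => ?_⟩)
    have hik : i ≤ φ (ψ k) := hk.trans (hψ.le_apply.trans hφ.le_apply)
    exact havoid (φ (ψ k)) n (hi _ hik) hnsig

lemma good_sUnion {A : SwissCheese} (hs : Summable (ff A)) {c : Set (Set (ℕ × ℕ))}
    (hc : IsChain (· ⊆ ·) c) (hcne : c.Nonempty) (hgood : ∀ F ∈ c, Good A F) :
    Good A (⋃₀ c) := by
  obtain ⟨E₁, hE₁⟩ := hcne
  have hrefl : ∀ n, (n, n) ∈ ⋃₀ c := fun n => ⟨E₁, hE₁, (hgood E₁ hE₁).refl n⟩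
  have hsymm : ∀ {m n}, (m, n) ∈ ⋃₀ c → (n, m) ∈ ⋃₀ c := by
    rintro m n ⟨F, hF, hmn⟩
    exact ⟨F, hF, (hgood F hF).symm hmn⟩
  have htrans : ∀ {x y z}, (x, y) ∈ ⋃₀ c → (y, z) ∈ ⋃₀ c → (x, z) ∈ ⋃₀ c := by
    rintro x y z ⟨F1, hF1, h1⟩ ⟨F2, hF2, h2⟩
    rcases hc.total hF1 hF2 with h | h
    · exact ⟨F2, hF2, (hgood F2 hF2).trans (h h1) h2⟩
    · exact ⟨F1, hF1, (hgood F1 hF1).trans h1 (h h2)⟩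
  have hseq : ∀ x : ℕ, ∃ G : ℕ → Set (ℕ × ℕ), (∀ k, G k ∈ c) ∧
      (∀ k, cls (G k) x ⊆ cls (⋃₀ c) x) ∧
      (∀ m ∈ cls (⋃₀ c) x, ∃ i, ∀ k, i ≤ k → m ∈ cls (G k) x) := by
    intro x
    have hCne : (cls (⋃₀ c) x).Nonempty := ⟨x, hrefl x⟩
    obtain ⟨e, he⟩ := (Set.to_countable (cls (⋃₀ c) x)).exists_eq_range hCne
    have hei : ∀ i, (x, e i) ∈ ⋃₀ c := by
      intro i
      have : e i ∈ cls (⋃₀ c) x := he ▸ Set.mem_range_self i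
      exact this
    choose F hFc hFe using fun i => hei i
    obtain ⟨G, hGc, hGmono, hEG⟩ := chain_seq hc hFc
    refine ⟨G, hGc, ?_, ?_⟩
    · intro k m hm
      exact ⟨G k, hGc k, hm⟩
    · intro m hm
      rw [he] at hm
      obtain ⟨i, rfl⟩ := hm
      exact ⟨i, fun k hik => hEG i k hik (hFe i)⟩
  refine ⟨hrefl, hsymm, htrans, ?_, ?_, ?_⟩
  · rintro m n ⟨F, hF, hmn⟩ hne
    exact (hgood F hF).supp hmn hne
  · obtain ⟨G, hGc, hGsub, hGcov⟩ := hseq 0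
    exact ZW_of_seq hs hGsub hGcov fun k => (hgood _ (hGc k)).zw
  · intro n hn hn0
    obtain ⟨G, hGc, hGsub, hGcov⟩ := hseq n
    refine HW_of_seq hs hGsub hGcov n hn (fun k => (hgood _ (hGc k)).refl n) ?_
    intro k
    exact (hgood _ (hGc k)).hw n hn fun h => hn0 ⟨G k, hGc k, h⟩

lemma good_diag {A : SwissCheese} (hs : Summable (ff A)) :
    Good A {p : ℕ × ℕ | p.1 = p.2} := by
  refine ⟨fun n => rfl, ?_, ?_, ?_, ?_, ?_⟩
  · intro m n h
    exact (h : m = n).symm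
  · intro x y z h1 h2
    exact (h1 : x = y).trans h2
  · intro m n h hne
    exact absurd h hne
  · refine ⟨A.a 0, A.r 0, A.r_nonneg 0, by simp, ?_, ?_⟩
    · have := sg_nonneg A (cls {p : ℕ × ℕ | p.1 = p.2} 0)
      linarith
    · intro n hn hnsig
      have : (0 : ℕ) = n := hn
      rw [← this] at hnsig
      exact absurd hnsig.1 (by norm_num)
  · intro n hn hn0
    refine ⟨A.a n, ?_⟩
    intro m hm hms
    have hnm : n = m := hm
    subst hnm
    have h1 : ff A n ≤ sg A (cls {p : ℕ × ℕ | p.1 = p.2} n) := le_sg hs rfl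
    rw [ff_eq_of_sig hn] at h1
    simpa using h1


noncomputable def mkB (c₀ : ℂ) (s₀ : ℝ) (W : ℕ → ℂ) (P : ℕ → Prop) (R : ℕ → ℝ)
    (hs₀ : 0 ≤ s₀) (hR : ∀ k, 0 ≤ R k) : SwissCheese where
  a k := if k = 0 then c₀ else letI := Classical.propDecidable (P k);
    if P k then W k else 0
  r k := if k = 0 then s₀ else letI := Classical.propDecidable (P k);
    if P k then R k else 0
  r_nonneg k := by
    split_ifs
    · exact hs₀
    · exact hR k
    · exact le_rfl

variable {c₀ : ℂ} {s₀ : ℝ} {W : ℕ → ℂ} {P : ℕ → Prop} {R : ℕ → ℝ}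
  {h1 : 0 ≤ s₀} {h2 : ∀ k, 0 ≤ R k}

lemma mkB_a_zero : (mkB c₀ s₀ W P R h1 h2).a 0 = c₀ := by simp [mkB]

lemma mkB_r_zero : (mkB c₀ s₀ W P R h1 h2).r 0 = s₀ := by simp [mkB]

lemma mkB_a_pos {k : ℕ} (hk : k ≠ 0) (hp : P k) :
    (mkB c₀ s₀ W P R h1 h2).a k = W k := by simp [mkB, hk, hp]

lemma mkB_r_pos {k : ℕ} (hk : k ≠ 0) (hp : P k) :
    (mkB c₀ s₀ W P R h1 h2).r k = R k := by simp [mkB, hk, hp]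

lemma mkB_r_neg {k : ℕ} (hk : k ≠ 0) (hp : ¬ P k) :
    (mkB c₀ s₀ W P R h1 h2).r k = 0 := by simp [mkB, hk, hp]

end SC15

/-- Semiclassicalisation theorem: if `δ₁(A) > 0` (in particular
`ρ(A) < ∞`), then there is a semiclassical abstract Swiss cheese `B` with `X_B ⊆ X_A` and
`δ₁(B) ≥ δ₁(A)`. -/

theorem stmt_15 (A : SwissCheese) (hsum : A.RadSummable) (hpos : 0 < A.disc) :
    ∃ B : SwissCheese, B.IsSemiclassical ∧ B.cheeseSet ⊆ A.cheeseSet ∧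
      A.disc ≤ B.disc := by
  classical
  open SC15 in
  have hs : Summable (ff A) := summable_ff hsum
  have hpos' : 0 < A.r 0 - A.radSum := by simpa [SwissCheese.disc] using hpos
  have hru : sg A Set.univ ≤ A.radSum := sg_univ_le hsum
  obtain ⟨E, hE0sub, hmax⟩ := zorn_subset_nonempty {F : Set (ℕ × ℕ) | SC15.Good A F}
    (fun c hcS hchain hcne => ⟨⋃₀ c, good_sUnion hs hchain hcne (fun F hF => hcS hF),
      fun F hF => Set.subset_sUnion_of_mem hF⟩) {p : ℕ × ℕ | p.1 = p.2} (good_diag hs)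
  have hg : SC15.Good A E := hmax.1
  obtain ⟨c₀, s₀, hs₀0, hball0, hlow0, havoid0⟩ := hg.zw
  set W : ℕ → ℂ := fun n =>
    if h : n ∈ A.sig ∧ (n, 0) ∉ E then (hg.hw n h.1 h.2).choose else 0 with hWdef
  have hW : ∀ n (h : n ∈ A.sig ∧ (n, 0) ∉ E), ∀ m ∈ cls E n, m ∈ A.sig →
      dist (W n) (A.a m) + A.r m ≤ sg A (cls E n) := by
    intro n h
    rw [hWdef]
    simp only [dif_pos h]
    exact (hg.hw n h.1 h.2).choose_spec
  -- maximality claim 1: every hole class ball is inside the outer ball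
  have claim_near : ∀ k, k ∈ A.sig → (k, 0) ∉ E →
      dist c₀ (W k) + sg A (cls E k) ≤ s₀ := by
    intro k hk hk0
    by_contra hfar
    push_neg at hfar
    have h0k : (0, k) ∉ E := fun h => hk0 (hg.symm h)
    have hdisj : Disjoint (cls E 0) (cls E k) := cls_disjoint hg h0k
    have hsum2 : sg A (cls E 0) + sg A (cls E k) ≤ sg A Set.univ := by
      rw [← sg_union hs hdisj]
      exact sg_mono hs (Set.subset_univ _)
    have hspos : 0 < s₀ - sg A (cls E k) := by linarith
    have hlt : s₀ - sg A (cls E k) < dist c₀ (W k) := by linarith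
    have hdpos : 0 < dist c₀ (W k) := lt_trans hspos hlt
    obtain ⟨z, hz1, hz2⟩ := escape_point (sg_nonneg A (cls E k)) hlt hdpos
    have hzwD : ZW A (cls E 0 ∪ cls E k) := by
      refine ⟨z, s₀ - sg A (cls E k), hspos.le, ?_, ?_, ?_⟩
      · have h2 := dist_triangle z c₀ (A.a 0)
        linarith
      · rw [sg_union hs hdisj]
        linarith
      · rintro n (hn | hn) hnsig
        · have ha1 := havoid0 n hn hnsig
          have ha2 := dist_triangle c₀ z (A.a n)
          have ha3 : dist c₀ z = dist z c₀ := dist_comm _ _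
          linarith
        · have ha1 := hW k ⟨hk, hk0⟩ n hn hnsig
          have ha2 := dist_triangle z (A.a n) (W k)
          have ha3 : dist (A.a n) (W k) = dist (W k) (A.a n) := dist_comm _ _
          linarith
    have hgood' : Good A (E ∪ (cls E 0 ∪ cls E k) ×ˢ (cls E 0 ∪ cls E k)) :=
      good_merge hg (Or.inl rfl) (Or.inr hk) (fun _ => hzwD)
        (fun h0 => absurd (Or.inl (hg.refl 0)) h0)
    have hEE : E ∪ (cls E 0 ∪ cls E k) ×ˢ (cls E 0 ∪ cls E k) ⊆ E :=
      hmax.2 hgood' Set.subset_union_left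
    exact hk0 (hEE (Or.inr ⟨Or.inr (hg.refl k), Or.inl (hg.refl 0)⟩))
  -- maximality claim 2: distinct hole class balls are far apart
  have claim_disj : ∀ j k, j ∈ A.sig → (j, 0) ∉ E → k ∈ A.sig → (k, 0) ∉ E →
      (j, k) ∉ E → sg A (cls E j) + sg A (cls E k) ≤ dist (W j) (W k) := by
    intro j k hj hj0 hk hk0 hjk
    by_contra hclose
    push_neg at hclose
    obtain ⟨z, hz1, hz2⟩ :=
      merge_point (sg_nonneg A (cls E j)) (sg_nonneg A (cls E k)) hclose.le
    have hdisj : Disjoint (cls E j) (cls E k) := cls_disjoint hg hjk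
    have hHW : HW A (cls E j ∪ cls E k) := by
      refine ⟨z, ?_⟩
      rintro n (hn | hn) hnsig
      · have ha1 := hW j ⟨hj, hj0⟩ n hn hnsig
        have ha2 := dist_triangle z (W j) (A.a n)
        rw [sg_union hs hdisj]
        linarith
      · have ha1 := hW k ⟨hk, hk0⟩ n hn hnsig
        have ha2 := dist_triangle z (W k) (A.a n)
        rw [sg_union hs hdisj]
        linarith
    have hgood' : Good A (E ∪ (cls E j ∪ cls E k) ×ˢ (cls E j ∪ cls E k)) :=
      good_merge hg (Or.inr hj) (Or.inr hk)
        (fun h0 => False.elim (h0.elim (fun h => hj0 h) (fun h => hk0 h)))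
        (fun _ => hHW)
    have hEE : E ∪ (cls E j ∪ cls E k) ×ˢ (cls E j ∪ cls E k) ⊆ E :=
      hmax.2 hgood' Set.subset_union_left
    exact hjk (hEE (Or.inr ⟨Or.inl (hg.refl j), Or.inr (hg.refl k)⟩))
  set K : ℕ → Prop := fun k => (k ∈ A.sig ∧ (k, 0) ∉ E) ∧ sInf (cls E k) = k with hKdef
  set Rf : ℕ → ℝ := fun k => sg A (cls E k) with hRdef
  have hRnn : ∀ k, 0 ≤ Rf k := fun k => sg_nonneg A _
  set B : SwissCheese := mkB c₀ s₀ W K Rf hs₀0 hRnn with hBdef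
  have hs₀big : A.disc ≤ s₀ := by
    have hm : sg A (cls E 0) ≤ sg A Set.univ := sg_mono hs (Set.subset_univ _)
    simp only [SwissCheese.disc]
    linarith
  have hs₀pos : 0 < s₀ := lt_of_lt_of_le hpos hs₀big
  have hKeep_pos : ∀ k, K k → 0 < sg A (cls E k) := by
    intro k hKk
    have hh : ff A k ≤ sg A (cls E k) := le_sg hs (hg.refl k)
    rw [ff_eq_of_sig hKk.1.1] at hh
    exact lt_of_lt_of_le hKk.1.1.2 hh
  have hKeep_nrel : ∀ j k, K j → K k → j ≠ k → (j, k) ∉ E := by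
    intro j k hj hk hne h
    apply hne
    have hcc : cls E j = cls E k := cls_eq hg h
    rw [← hj.2, ← hk.2, hcc]
  -- summation bounds
  have hKSd : ∀ j k : ℕ, j ≠ k →
      Disjoint (if K (j+1) then cls E (j+1) else ∅)
        (if K (k+1) then cls E (k+1) else ∅) := by
    intro j k hne
    split_ifs with hj hk hk
    · exact cls_disjoint hg (hKeep_nrel _ _ hj hk (by omega))
    · simp
    · simp
    · simp
  have hKSsub : ∀ k : ℕ, (if K (k+1) then cls E (k+1) else ∅) ⊆
      Set.univ \ cls E 0 := by
    intro k
    split_ifs with hk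
    · intro m hm
      exact ⟨trivial, fun hm0 => hk.1.2 (hg.trans hm (hg.symm hm0))⟩
    · simp
  have hBrKS : ∀ k : ℕ, B.r (k+1) ≤ sg A (if K (k+1) then cls E (k+1) else ∅) := by
    intro k
    by_cases hk : K (k+1)
    · rw [hBdef, mkB_r_pos (Nat.succ_ne_zero k) hk, if_pos hk]
    · rw [hBdef, mkB_r_neg (Nat.succ_ne_zero k) hk, if_neg hk, sg_empty]
  have hFsum : ∀ F : Finset ℕ, (∑ k ∈ F, B.r (k+1)) ≤
      sg A (⋃ k ∈ F, (if K (k+1) then cls E (k+1) else ∅)) := by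
    intro F
    induction F using Finset.induction_on with
    | empty => simp [sg_empty]
    | @insert a F ha ih =>
      rw [Finset.sum_insert ha, Finset.set_biUnion_insert]
      have hdisjU : Disjoint (if K (a+1) then cls E (a+1) else ∅)
          (⋃ k ∈ F, (if K (k+1) then cls E (k+1) else ∅)) := by
        simp only [Set.disjoint_iUnion_right]
        intro i hi
        exact hKSd a i (fun h => ha (h ▸ hi))
      rw [sg_union hs hdisjU]
      exact add_le_add (hBrKS a) ih
  have hsumKS : ∀ F : Finset ℕ, (∑ k ∈ F, B.r (k+1)) ≤ sg A (Set.univ \ cls E 0) := by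
    intro F
    refine (hFsum F).trans (sg_mono hs ?_)
    exact Set.iUnion₂_subset fun k _ => hKSsub k
  have hsummB : Summable (fun n => B.r (n+1)) :=
    summable_of_sum_range_le (fun n => B.r_nonneg _) (fun n => hsumKS (Finset.range n))
  have htsumB : (∑' n, B.r (n+1)) ≤ sg A (Set.univ \ cls E 0) :=
    Real.tsum_le_of_sum_range_le (fun n => B.r_nonneg _) (fun n => hsumKS (Finset.range n))
  have hsplit : sg A (cls E 0) + sg A (Set.univ \ cls E 0) = sg A Set.univ := by
    rw [← sg_union hs Set.disjoint_sdiff_right,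
      Set.union_diff_cancel (Set.subset_univ _)]
  refine ⟨B, ⟨hsummB, ?_, ?_⟩, ?_, ?_⟩
  · rw [hBdef, mkB_r_zero]
    exact hs₀pos
  · -- holes: containment and disjointness
    intro k hk
    obtain ⟨hk1, hkpos⟩ := hk
    have hkne : k ≠ 0 := by omega
    have hKk : K k := by
      by_contra hcon
      rw [hBdef, mkB_r_neg hkne hcon] at hkpos
      exact lt_irrefl _ hkpos
    constructor
    · rw [hBdef, mkB_a_zero, mkB_r_zero, mkB_a_pos hkne hKk, mkB_r_pos hkne hKk]
      apply ball_subset_ball'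
      have hcn := claim_near k hKk.1.1 hKk.1.2
      have hdc : dist (W k) c₀ = dist c₀ (W k) := dist_comm _ _
      rw [hRdef]
      dsimp only
      linarith
    · intro l hl hlk
      obtain ⟨hl1, hlpos⟩ := hl
      have hlne : l ≠ 0 := by omega
      have hKl : K l := by
        by_contra hcon
        rw [hBdef, mkB_r_neg hlne hcon] at hlpos
        exact lt_irrefl _ hlpos
      rw [hBdef, mkB_a_pos hkne hKk, mkB_r_pos hkne hKk,
        mkB_a_pos hlne hKl, mkB_r_pos hlne hKl]
      apply Set.disjoint_iff_inter_eq_empty.1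
      apply ball_disjoint_ball
      rw [hRdef]
      dsimp only
      exact claim_disj k l hKk.1.1 hKk.1.2 hKl.1.1 hKl.1.2
        (hKeep_nrel k l hKk hKl (Ne.symm hlk))
  · -- cheese set inclusion
    intro x hx
    obtain ⟨hx1, hx2⟩ := hx
    have hxc₀ : dist x c₀ ≤ s₀ := by
      have hmem : x ∈ closedBall (B.a 0) (B.r 0) := hx1
      rwa [hBdef, mkB_a_zero, mkB_r_zero, mem_closedBall] at hmem
    have hx2' : ∀ m, 1 ≤ m → x ∉ ball (B.a m) (B.r m) := by
      intro m hm hxb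
      exact hx2 (Set.mem_biUnion hm hxb)
    constructor
    · rw [mem_closedBall]
      have htr := dist_triangle x c₀ (A.a 0)
      linarith
    · intro hxU
      simp only [Set.mem_iUnion, Set.mem_Ici] at hxU
      obtain ⟨n, hn1, hxb⟩ := hxU
      rcases le_or_gt (A.r n) 0 with hrn | hrn
      · have := mem_ball.1 hxb
        have := dist_nonneg (x := x) (y := A.a n)
        linarith
      have hnsig : n ∈ A.sig := ⟨hn1, hrn⟩
      by_cases hn0 : (n, 0) ∈ E
      · have hncls0 : n ∈ cls E 0 := hg.symm hn0
        have ha1 := havoid0 n hncls0 hnsig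
        have ha2 := dist_triangle c₀ x (A.a n)
        have ha3 := mem_ball.1 hxb
        have ha4 : dist c₀ x = dist x c₀ := dist_comm _ _
        linarith
      · set j := sInf (cls E n) with hjdef
        have hjmem : j ∈ cls E n := Nat.sInf_mem ⟨n, hg.refl n⟩
        have hnj : (n, j) ∈ E := hjmem
        have hclseq : cls E j = cls E n := (cls_eq hg hnj).symm
        have hjsig : j ∈ A.sig := cls_subset_sig hg hnsig hn0 hjmem
        have hj0 : (j, 0) ∉ E := fun h => hn0 (hg.trans hnj h)
        have hKj : K j := ⟨⟨hjsig, hj0⟩, by rw [hclseq, ← hjdef]⟩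
        have hj1 : 1 ≤ j := hjsig.1
        have hxnb := hx2' j hj1
        rw [hBdef, mkB_a_pos (by omega) hKj, mkB_r_pos (by omega) hKj] at hxnb
        have hsub : ball (A.a n) (A.r n) ⊆ ball (W j) (Rf j) := by
          apply ball_subset_ball'
          have ha1 := hW j ⟨hjsig, hj0⟩ n (by rw [hclseq]; exact hg.refl n) hnsig
          have ha2 : dist (A.a n) (W j) = dist (W j) (A.a n) := dist_comm _ _
          rw [hRdef]
          dsimp only
          linarith
        exact hxnb (hsub hxb)
  · -- discrepancy
    have hr0B : B.r 0 = s₀ := by rw [hBdef, mkB_r_zero]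
    have hrsB : B.radSum = ∑' n, B.r (n+1) := rfl
    simp only [SwissCheese.disc, hr0B, hrsB]
    linarith
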